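/- Let X be a Banach space with the p-Banach-Saks property for some p ∈ (1,∞), and assume X contains no isomorphic copy of ℓ₁. Then X has the alternating Banach-Saks property. -/

import Mathlib

open Filter Topology Metric Set Pointwise

noncomputable section

namespace CLG

variable {X Y : Type*}

/-- The expansion modulus `ω_f`. -/
def expansionMod [PseudoMetricSpace X] [PseudoMetricSpace Y] (f : X → Y) (t : ℝ) : ℝ :=
  sSup {r : ℝ | ∃ x y : X, dist x y ≤ t ∧ r = dist (f x) (f y)}

/-- The compression modulus `ρ_f`. -/
def compressionMod [PseudoMetricSpace X] [PseudoMetricSpace Y] (f : X → Y) (t : ℝ) : ℝ :=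
  sInf {r : ℝ | ∃ x y : X, t ≤ dist x y ∧ r = dist (f x) (f y)}

/-- `f` is a coarse map: `ω_f(t) < ∞` for every `t`. -/
def IsCoarseMap [PseudoMetricSpace X] [PseudoMetricSpace Y] (f : X → Y) : Prop :=
  ∀ t : ℝ, ∃ C : ℝ, ∀ x y : X, dist x y ≤ t → dist (f x) (f y) ≤ C

/-- `f` is a coarse embedding: a coarse map with `ρ_f(t) → ∞`. -/
def IsCoarseEmbedding [PseudoMetricSpace X] [PseudoMetricSpace Y] (f : X → Y) : Prop :=
  IsCoarseMap f ∧ ∀ M : ℝ, ∃ t : ℝ, ∀ x y : X, t ≤ dist x y → M ≤ dist (f x) (f y)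

/-- `f` is a uniform embedding: `ω_f(t) → 0` as `t → 0` and `ρ_f(t) > 0` for `t > 0`. -/
def IsUniformEmbeddingMap [PseudoMetricSpace X] [PseudoMetricSpace Y] (f : X → Y) : Prop :=
  (∀ ε > (0:ℝ), ∃ δ > (0:ℝ), ∀ x y : X, dist x y ≤ δ → dist (f x) (f y) ≤ ε) ∧
  (∀ t > (0:ℝ), ∃ r > (0:ℝ), ∀ x y : X, t ≤ dist x y → r ≤ dist (f x) (f y))

/-- `f` is a coarse Lipschitz embedding. -/
def IsCoarseLipschitzEmbedding [PseudoMetricSpace X] [PseudoMetricSpace Y] (f : X → Y) : Prop :=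
  ∃ L : ℝ, 0 < L ∧ ∀ x y : X,
    dist (f x) (f y) ≤ L * dist x y + L ∧ L⁻¹ * dist x y - L ≤ dist (f x) (f y)

def CoarseLipschitzEmbeds (X Y : Type*) [PseudoMetricSpace X] [PseudoMetricSpace Y] : Prop :=
  ∃ f : X → Y, IsCoarseLipschitzEmbedding f

/-- The set of exponents `α > 0` admitting a coarse embedding `f : X → Y` with
`ρ_f(t) ≥ L⁻¹ t^α − L`. -/
def compressionSet (X Y : Type*) [NormedAddCommGroup X] [NormedAddCommGroup Y] : Set ℝ :=
  {α : ℝ | 0 < α ∧ ∃ f : X → Y, IsCoarseMap f ∧ ∃ L : ℝ, 0 < L ∧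
    ∀ x y : X, L⁻¹ * ‖x - y‖ ^ α - L ≤ ‖f x - f y‖}

/-- The compression exponent `α_Y(X)` (note the argument order: `compressionExp X Y = α_Y(X)`).
By convention `sSup ∅ = 0`, matching `α_Y(X) = 0` when no such embedding exists. -/
def compressionExp (X Y : Type*) [NormedAddCommGroup X] [NormedAddCommGroup Y] : ℝ :=
  sSup (compressionSet X Y)

/-- The modulus of asymptotic uniform smoothness `ρ̄_X(t)`. -/
def ausModulus (X : Type*) [NormedAddCommGroup X] [NormedSpace ℝ X] (t : ℝ) : ℝ :=
  ⨆ x : {x : X // ‖x‖ = 1},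
    ⨅ E : {E : Submodule ℝ X // FiniteDimensional ℝ (X ⧸ E)},
      ⨆ h : {h : X // h ∈ E.1 ∧ ‖h‖ = 1}, (‖x.1 + t • h.1‖ - 1)

/-- The modulus of asymptotic uniform convexity `δ̄_X(t)`. -/
def aucModulus (X : Type*) [NormedAddCommGroup X] [NormedSpace ℝ X] (t : ℝ) : ℝ :=
  ⨅ x : {x : X // ‖x‖ = 1},
    ⨆ E : {E : Submodule ℝ X // FiniteDimensional ℝ (X ⧸ E)},
      ⨅ h : {h : X // h ∈ E.1 ∧ ‖h‖ = 1}, (‖x.1 + t • h.1‖ - 1)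

/-- Asymptotically uniformly smooth: `ρ̄_X(t)/t → 0` as `t → 0⁺`. -/
def AsympUniformlySmooth (X : Type*) [NormedAddCommGroup X] [NormedSpace ℝ X] : Prop :=
  Tendsto (fun t => ausModulus X t / t) (𝓝[>] (0:ℝ)) (𝓝 0)

/-- Asymptotically `p`-uniformly smooth: `ρ̄_X(t) ≤ C t^p` on `[0,1]`. -/
def AsympPUnifSmooth (X : Type*) [NormedAddCommGroup X] [NormedSpace ℝ X] (p : ℝ) : Prop :=
  ∃ C > (0:ℝ), ∀ t ∈ Set.Icc (0:ℝ) 1, ausModulus X t ≤ C * t ^ p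

/-- Asymptotically `p`-uniformly convex: `δ̄_X(t) ≥ C t^p` on `[0,1]`. -/
def AsympPUnifConvex (X : Type*) [NormedAddCommGroup X] [NormedSpace ℝ X] (p : ℝ) : Prop :=
  ∃ C > (0:ℝ), ∀ t ∈ Set.Icc (0:ℝ) 1, C * t ^ p ≤ aucModulus X t

/-- Reflexivity of a Banach space: the canonical embedding into the double dual is onto. -/
def BanachReflexive (X : Type*) [NormedAddCommGroup X] [NormedSpace ℝ X] : Prop :=
  Function.Surjective (NormedSpace.inclusionInDoubleDual ℝ X)

/-- A weakly null sequence. -/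
def WeaklyNull [NormedAddCommGroup X] [NormedSpace ℝ X] (x : ℕ → X) : Prop :=
  ∀ φ : X →L[ℝ] ℝ, Tendsto (fun n => φ (x n)) atTop (𝓝 0)

/-- A semi-normalized sequence. -/
def SemiNormalized [NormedAddCommGroup X] (x : ℕ → X) : Prop :=
  ∃ a b : ℝ, 0 < a ∧ ∀ n, a ≤ ‖x n‖ ∧ ‖x n‖ ≤ b

/-- The Banach-Saks property. -/
def BanachSaksProp (X : Type*) [NormedAddCommGroup X] [NormedSpace ℝ X] : Prop :=
  ∀ x : ℕ → X, (∃ b : ℝ, ∀ n, ‖x n‖ ≤ b) → ∃ φ : ℕ → ℕ, StrictMono φ ∧ ∃ L : X,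
    Tendsto (fun k : ℕ => (k:ℝ)⁻¹ • ∑ j ∈ Finset.range k, x (φ j)) atTop (𝓝 L)

/-- The alternating Banach-Saks property. -/
def AltBanachSaks (X : Type*) [NormedAddCommGroup X] [NormedSpace ℝ X] : Prop :=
  ∀ x : ℕ → X, (∃ b : ℝ, ∀ n, ‖x n‖ ≤ b) → ∃ φ : ℕ → ℕ, StrictMono φ ∧
    ∃ ε : ℕ → ℝ, (∀ j, ε j = 1 ∨ ε j = -1) ∧ ∃ L : X,
      Tendsto (fun k : ℕ => (k:ℝ)⁻¹ • ∑ j ∈ Finset.range k, ε j • x (φ j)) atTop (𝓝 L)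

/-- The `p`-Banach-Saks property. -/
def PBanachSaks (X : Type*) [NormedAddCommGroup X] [NormedSpace ℝ X] (p : ℝ) : Prop :=
  ∀ x : ℕ → X, SemiNormalized x → WeaklyNull x →
    ∃ φ : ℕ → ℕ, StrictMono φ ∧ ∃ c > (0:ℝ), ∀ (k : ℕ) (n : Fin k → ℕ),
      StrictMono n → (∀ i, k ≤ n i) → ‖∑ i, x (φ (n i))‖ ≤ c * (k : ℝ) ^ (1 / p)

/-- The `p`-co-Banach-Saks property. -/
def PCoBanachSaks (X : Type*) [NormedAddCommGroup X] [NormedSpace ℝ X] (p : ℝ) : Prop :=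
  ∀ x : ℕ → X, SemiNormalized x → WeaklyNull x →
    ∃ φ : ℕ → ℕ, StrictMono φ ∧ ∃ c > (0:ℝ), ∀ (k : ℕ) (n : Fin k → ℕ),
      StrictMono n → (∀ i, k ≤ n i) → c * (k : ℝ) ^ (1 / p) ≤ ‖∑ i, x (φ (n i))‖

/-- The almost `p`-co-Banach-Saks property. -/
def AlmostPCoBanachSaks (X : Type*) [NormedAddCommGroup X] [NormedSpace ℝ X] (p : ℝ) : Prop :=
  ∀ x : ℕ → X, SemiNormalized x → WeaklyNull x →
    ∃ φ : ℕ → ℕ, StrictMono φ ∧ ∃ θ : ℕ → ℝ, (∀ j, 1 ≤ θ j) ∧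
      (∀ α > (0:ℝ), Tendsto (fun j : ℕ => (j:ℝ) ^ α / θ j) atTop atTop) ∧
      ∀ (k : ℕ) (n : Fin k → ℕ), StrictMono n → (∀ i, k ≤ n i) →
        (k:ℝ) ^ (1 / p) / θ k ≤ ‖∑ i, x (φ (n i))‖

/-- `X` contains an isomorphic copy of `ℓ₁`, witnessed by a sequence equivalent to the
unit vector basis of `ℓ₁`. -/
def ContainsL1Copy (X : Type*) [NormedAddCommGroup X] [NormedSpace ℝ X] : Prop :=
  ∃ (x : ℕ → X) (c C : ℝ), 0 < c ∧ 0 < C ∧ ∀ (k : ℕ) (a : Fin k → ℝ),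
    c * (∑ i, |a i|) ≤ ‖∑ i, a i • x i.1‖ ∧ ‖∑ i, a i • x i.1‖ ≤ C * ∑ i, |a i|

/-- The set of approximate midpoints of `x` and `y` with error `δ`. -/
def Mid [PseudoMetricSpace X] (x y : X) (δ : ℝ) : Set X :=
  {z : X | max (dist x z) (dist y z) ≤ (1 + δ) / 2 * dist x y}

/-- `Lip_s(f) = sup_{t ≥ s} ω_f(t)/t`. -/
def lipAt [PseudoMetricSpace X] [PseudoMetricSpace Y] (f : X → Y) (s : ℝ) : ℝ :=
  ⨆ t : {t : ℝ // s ≤ t}, expansionMod f t.1 / t.1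

/-- `Lip_∞(f) = inf_{s > 0} Lip_s(f)`. -/
def lipInfty [PseudoMetricSpace X] [PseudoMetricSpace Y] (f : X → Y) : ℝ :=
  ⨅ s : {s : ℝ // 0 < s}, lipAt f s.1

end CLG



namespace NW

/-- `a` is an initial segment of `N`. -/
def IsInitSeg (a : Finset ℕ) (N : Set ℕ) : Prop :=
  ↑a ⊆ N ∧ ∀ x ∈ N, x ∉ a → ∀ y ∈ a, y < x

variable (F : Set (Finset ℕ))

def Accepts (M : Set ℕ) (a : Finset ℕ) : Prop :=
  ∀ L : Set ℕ, L.Infinite → L ⊆ M → (∀ x ∈ L, ∀ y ∈ a, y < x) →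
    ∃ b ∈ F, IsInitSeg b (↑a ∪ L)

def Rejects (M : Set ℕ) (a : Finset ℕ) : Prop :=
  ∀ M' ⊆ M, M'.Infinite → ¬ Accepts F M' a

def Decides (M : Set ℕ) (a : Finset ℕ) : Prop := Accepts F M a ∨ Rejects F M a

variable {F}

lemma Accepts.mono {M M' : Set ℕ} {a : Finset ℕ} (h : Accepts F M a) (hs : M' ⊆ M) :
    Accepts F M' a := fun L hL hLs hgt => h L hL (hLs.trans hs) hgt

lemma Rejects.mono {M M' : Set ℕ} {a : Finset ℕ} (h : Rejects F M a) (hs : M' ⊆ M) :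
    Rejects F M' a := fun N hN hNi => h N (hN.trans hs) hNi

lemma Decides.mono {M M' : Set ℕ} {a : Finset ℕ} (h : Decides F M a) (hs : M' ⊆ M) :
    Decides F M' a := h.imp (fun h => h.mono hs) (fun h => h.mono hs)

lemma not_rejects_self {M : Set ℕ} {a : Finset ℕ} (hM : M.Infinite) (h : Rejects F M a) :
    ¬ Accepts F M a := h M subset_rfl hM

/-- Transfer lemma: decisions transfer between sets agreeing above `a`. -/
lemma Accepts.transfer {M M' : Set ℕ} {a : Finset ℕ}
    (h : Accepts F M a) (hsub : ∀ x ∈ M', (∀ y ∈ a, y < x) → x ∈ M) :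
    Accepts F M' a := by
  intro L hL hLs hgt
  exact h L hL (fun x hx => hsub x (hLs hx) (hgt x hx)) hgt

lemma Rejects.transfer {M M' : Set ℕ} {a : Finset ℕ}
    (h : Rejects F M a) (hsub : ∀ x ∈ M', (∀ y ∈ a, y < x) → x ∈ M) :
    Rejects F M' a := by
  intro N hN hNi hacc
  set N' : Set ℕ := N ∩ {x | ∀ y ∈ a, y < x} with hN'
  have hfin : (N \ N').Finite := by
    apply Set.Finite.subset (Set.finite_Iic (a.sup id))
    intro x hx
    rcases hx with ⟨hx1, hx2⟩
    simp only [hN', Set.mem_inter_iff, Set.mem_setOf_eq, not_and] at hx2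
    rcases not_forall.mp (hx2 hx1) with ⟨y, hy⟩
    rcases not_forall.mp hy with ⟨hya, hlt⟩
    exact Set.mem_Iic.mpr (le_trans (le_of_not_gt hlt) (Finset.le_sup (f := id) hya))
  have hN'i : N'.Infinite := by
    have := hNi.diff hfin
    apply this.mono
    intro x hx
    rcases hx with ⟨h1, h2⟩
    by_cases hx' : x ∈ N'
    · exact hx'
    · exact absurd ⟨h1, hx'⟩ h2
  have hN'M : N' ⊆ M := fun x hx => hsub x (hN (hx.1)) hx.2
  exact h N' hN'M hN'i (hacc.mono (Set.inter_subset_left))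

lemma Decides.transfer {M M' : Set ℕ} {a : Finset ℕ}
    (h : Decides F M a) (hsub : ∀ x ∈ M', (∀ y ∈ a, y < x) → x ∈ M) :
    Decides F M' a := h.imp (fun h => h.transfer hsub) (fun h => h.transfer hsub)

/-- L3: every infinite set has an infinite subset deciding `a`. -/
lemma exists_decides (M : Set ℕ) (hM : M.Infinite) (a : Finset ℕ) :
    ∃ M' ⊆ M, M'.Infinite ∧ Decides F M' a := by
  by_cases h : Rejects F M a
  · exact ⟨M, subset_rfl, hM, Or.inr h⟩
  · simp only [Rejects, not_forall] at h
    rcases h with ⟨M', hM'M, hM'i, hacc⟩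
    exact ⟨M', hM'M, hM'i, Or.inl (not_not.mp hacc)⟩

/-- L4: decide finitely many sets at once. -/
lemma exists_decides_list (M : Set ℕ) (hM : M.Infinite) (l : List (Finset ℕ)) :
    ∃ M' ⊆ M, M'.Infinite ∧ ∀ a ∈ l, Decides F M' a := by
  induction l generalizing M with
  | nil => exact ⟨M, subset_rfl, hM, by simp⟩
  | cons a l ih =>
    rcases exists_decides (F := F) M hM a with ⟨M1, hM1M, hM1i, hdec⟩
    rcases ih M1 hM1i with ⟨M', hM'M1, hM'i, hall⟩
    refine ⟨M', hM'M1.trans hM1M, hM'i, ?_⟩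
    intro b hb
    rcases List.mem_cons.mp hb with h | h
    · exact h ▸ hdec.mono hM'M1
    · exact hall b h

lemma mem_F_accepts {a : Finset ℕ} (ha : a ∈ F) (M : Set ℕ) : Accepts F M a := by
  intro L hL hLs hgt
  refine ⟨a, ha, ?_, ?_⟩
  · exact fun x hx => Set.mem_union_left _ hx
  · intro x hx hxa y hy
    rcases hx with hx | hx
    · exact absurd hx hxa
    · exact hgt x hx y hy

end NW
section
namespace NW
variable {F : Set (Finset ℕ)}

def StepRel (F : Set (Finset ℕ)) (s s' : Finset ℕ × Set ℕ) : Prop :=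
  s'.1 = insert (sInf s.2) s.1 ∧ s'.2 ⊆ s.2 ∧ s'.2.Infinite ∧
    (∀ x ∈ s'.2, sInf s.2 < x) ∧ (∀ a ∈ s'.1.powerset, Decides F s'.2 a)

lemma step_exists (s : Finset ℕ × Set ℕ) (h : s.2.Infinite) : ∃ s', StepRel F s s' := by
  set m := sInf s.2
  have hM1 : (s.2 ∩ Set.Ioi m).Infinite := by
    have : (s.2 \ Set.Iic m).Infinite := h.diff (Set.finite_Iic m)
    apply this.mono; intro x hx; exact ⟨hx.1, Set.mem_Ioi.mpr (lt_of_not_ge (fun hh => hx.2 hh))⟩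
  rcases exists_decides_list (F := F) _ hM1 ((insert m s.1).powerset.toList) with
    ⟨M', hM'sub, hM'i, hdec⟩
  refine ⟨(insert m s.1, M'), rfl, hM'sub.trans Set.inter_subset_left, hM'i, ?_, ?_⟩
  · intro x hx; exact (hM'sub hx).2
  · intro a ha; exact hdec a (Finset.mem_toList.mpr ha)

open scoped Classical in
noncomputable def step (F : Set (Finset ℕ)) (s : Finset ℕ × Set ℕ) : Finset ℕ × Set ℕ :=
  if h : s.2.Infinite then (step_exists (F := F) s h).choose else s

lemma step_rel {s : Finset ℕ × Set ℕ} (h : s.2.Infinite) : StepRel F s (step F s) := by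
  classical
  rw [step, dif_pos h]; exact (step_exists s h).choose_spec

/-- L5 : fusion. -/
lemma fusion (M0 : Set ℕ) (hM0 : M0.Infinite) :
    ∃ M ⊆ M0, M.Infinite ∧ ∀ a : Finset ℕ, ↑a ⊆ M → Decides F M a := by
  rcases exists_decides (F := F) M0 hM0 ∅ with ⟨M1, hM1M0, hM1i, hdec0⟩
  set chain : ℕ → Finset ℕ × Set ℕ := fun k => (step F)^[k] (∅, M1) with hchaindef
  have hinf : ∀ k, (chain k).2.Infinite := by
    intro k; induction k with
    | zero => exact hM1i
    | succ k ih =>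
      have : chain (k+1) = step F (chain k) := by
        simp only [hchaindef, Function.iterate_succ_apply']
      rw [this]; exact (step_rel ih).2.2.1
  have hrel : ∀ k, StepRel F (chain k) (chain (k+1)) := by
    intro k
    have : chain (k+1) = step F (chain k) := by
      simp only [hchaindef, Function.iterate_succ_apply']
    rw [this]; exact step_rel (hinf k)
  set m : ℕ → ℕ := fun k => sInf (chain k).2 with hmdef
  have hmem : ∀ k, m k ∈ (chain k).2 := fun k => Nat.sInf_mem (hinf k).nonempty
  have hdesc : ∀ j k, j ≤ k → (chain k).2 ⊆ (chain j).2 := by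
    intro j k hjk
    induction k with
    | zero => simp_all
    | succ k ih =>
      rcases Nat.lt_or_ge j (k+1) with h | h
      · exact (hrel k).2.1.trans (ih (Nat.lt_succ_iff.mp h))
      · have : j = k + 1 := le_antisymm hjk h
        rw [this]
  have hmmono : StrictMono m := by
    apply strictMono_nat_of_lt_succ
    intro k
    exact (hrel k).2.2.2.1 _ (hmem (k+1))
  have hhist : ∀ k, (chain k).1 = (Finset.range k).image m := by
    intro k; induction k with
    | zero => simp [hchaindef]
    | succ k ih =>
      have h1 := (hrel k).1
      rw [h1, ih, Finset.range_add_one, Finset.image_insert]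
  set Ms : Set ℕ := Set.range m with hMsdef
  have hMsM1 : Ms ⊆ M1 := by
    rintro x ⟨k, rfl⟩
    exact hdesc 0 k (Nat.zero_le k) (hmem k)
  have hMsInf : Ms.Infinite := Set.infinite_range_of_injective hmmono.injective
  refine ⟨Ms, hMsM1.trans hM1M0, hMsInf, ?_⟩
  intro a ha
  rcases Finset.eq_empty_or_nonempty a with rfl | hne
  · exact hdec0.mono hMsM1
  · -- a nonempty: find the stage
    obtain ⟨i, hi⟩ : ∃ i, a.max' hne = m i := by
      have : a.max' hne ∈ Ms := ha (a.max'_mem hne)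
      rcases this with ⟨i, hi⟩; exact ⟨i, hi.symm⟩
    have hsub : a ⊆ (chain (i+1)).1 := by
      intro x hx
      rcases ha hx with ⟨j, hj⟩
      have : m j ≤ m i := by rw [hj, ← hi]; exact a.le_max' x hx
      have hji : j ≤ i := by
        by_contra hc
        exact absurd (hmmono (Nat.lt_of_not_le hc)) (not_lt.mpr this)
      rw [hhist (i+1), ← hj]
      exact Finset.mem_image.mpr ⟨j, Finset.mem_range.mpr (Nat.lt_succ_of_le hji), rfl⟩
    have hdeca : Decides F (chain (i+1)).2 a :=
      (hrel i).2.2.2.2 a (Finset.mem_powerset.mpr hsub)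
    apply hdeca.transfer
    rintro x ⟨k, rfl⟩ hgt
    have : m i < m k := hgt (m i) (hi ▸ a.max'_mem hne)
    have hik : i < k := by
      by_contra hc
      exact absurd this (not_lt.mpr (hmmono.monotone (Nat.le_of_not_lt hc)))
    exact hdesc (i+1) k hik (hmem k)

end NW
end
section
namespace NW
variable {F : Set (Finset ℕ)}

/-- L6: if `Ms` decides all its finite subsets and rejects `a`, only finitely many
one-point extensions fail to be rejected. -/
lemma spread {Ms : Set ℕ} (hMsInf : Ms.Infinite)
    (hmaster : ∀ a : Finset ℕ, ↑a ⊆ Ms → Decides F Ms a)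
    {a : Finset ℕ} (haMs : ↑a ⊆ Ms) (hrej : Rejects F Ms a) :
    {n | n ∈ Ms ∧ (∀ y ∈ a, y < n) ∧ ¬ Rejects F Ms (insert n a)}.Finite := by
  by_contra hinf
  set N := {n | n ∈ Ms ∧ (∀ y ∈ a, y < n) ∧ ¬ Rejects F Ms (insert n a)} with hNdef
  have hNMs : N ⊆ Ms := fun n hn => hn.1
  have hNinf : N.Infinite := by
    rw [← Set.not_infinite] at hinf
    exact not_not.mp hinf
  have hacc : ∀ n ∈ N, Accepts F Ms (insert n a) := by
    intro n hn
    have hsub : ↑(insert n a) ⊆ Ms := by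
      intro x hx
      rcases Finset.mem_insert.mp (by exact_mod_cast hx) with rfl | hx'
      · exact hn.1
      · exact haMs hx'
    rcases hmaster _ hsub with h | h
    · exact h
    · exact absurd h hn.2.2
  apply hrej N hNMs hNinf
  intro L hLi hLN hgt
  have hLne : L.Nonempty := hLi.nonempty
  set n := sInf L with hn
  have hnL : n ∈ L := Nat.sInf_mem hLne
  set L' := L \ {n} with hL'
  have hL'i : L'.Infinite := hLi.diff (Set.finite_singleton n)
  have hL'Ms : L' ⊆ Ms := fun x hx => hNMs (hLN hx.1)
  have hL'gt : ∀ x ∈ L', ∀ y ∈ insert n a, y < x := by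
    intro x hx y hy
    rcases Finset.mem_insert.mp hy with rfl | hy'
    · exact lt_of_le_of_ne (Nat.sInf_le hx.1) (fun h => hx.2 h.symm)
    · exact hgt x hx.1 y hy'
  rcases hacc n (hLN hnL) L' hL'i hL'Ms hL'gt with ⟨b, hbF, hbinit⟩
  refine ⟨b, hbF, ?_⟩
  have : (↑(insert n a) : Set ℕ) ∪ L' = ↑a ∪ L := by
    ext x
    simp only [Finset.coe_insert, Set.mem_union, Set.mem_insert_iff, Finset.mem_coe,
      Set.mem_diff, Set.mem_singleton_iff, hL']
    constructor
    · rintro (⟨rfl | h⟩ | ⟨h, _⟩)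
      · exact Or.inr hnL
      · exact Or.inl ‹_›
      · exact Or.inr h
    · rintro (h | h)
      · exact Or.inl (Or.inr h)
      · by_cases hxn : x = n
        · exact Or.inl (Or.inl hxn)
        · exact Or.inr ⟨h, hxn⟩
  rwa [this] at hbinit

def ExtStepRel (F : Set (Finset ℕ)) (Ms : Set ℕ) (s s' : ℕ × Finset ℕ) : Prop :=
  s'.2 = insert s'.1 s.2 ∧ s'.1 ∈ Ms ∧ (∀ y ∈ s.2, y < s'.1) ∧
    ∀ a : Finset ℕ, a ⊆ s'.2 → Rejects F Ms a

lemma extStep_exists {Ms : Set ℕ} (hMsInf : Ms.Infinite)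
    (hmaster : ∀ a : Finset ℕ, ↑a ⊆ Ms → Decides F Ms a)
    (s : ℕ × Finset ℕ) (hsub : ↑s.2 ⊆ Ms) (hrej : ∀ a : Finset ℕ, a ⊆ s.2 → Rejects F Ms a) :
    ∃ s', ExtStepRel F Ms s s' := by
  classical
  set bad : Set ℕ := ⋃ a ∈ (↑s.2.powerset : Set (Finset ℕ)),
    {n | n ∈ Ms ∧ (∀ y ∈ a, y < n) ∧ ¬ Rejects F Ms (insert n a)} with hbaddef
  have hbadfin : bad.Finite := by
    apply Set.Finite.biUnion (s.2.powerset.finite_toSet)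
    intro a ha
    have ha' : a ⊆ s.2 := Finset.mem_powerset.mp (by exact_mod_cast ha)
    exact spread hMsInf hmaster (fun x hx => hsub (ha' hx)) (hrej a ha')
  have hbdd : BddAbove (bad ∪ ↑s.2) := (hbadfin.union s.2.finite_toSet).bddAbove
  rcases hbdd with ⟨B, hB⟩
  rcases hMsInf.exists_gt B with ⟨p, hpMs, hpB⟩
  refine ⟨(p, insert p s.2), rfl, hpMs, ?_, ?_⟩
  · intro y hy
    exact lt_of_le_of_lt (hB (Or.inr hy)) hpB
  · intro a ha
    by_cases hpa : p ∈ a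
    · have ha' : a.erase p ⊆ s.2 := by
        intro x hx
        rcases Finset.mem_insert.mp (ha (Finset.mem_of_mem_erase hx)) with rfl | h
        · exact absurd rfl (Finset.ne_of_mem_erase hx)
        · exact h
      have hkey : p ∉ bad := fun hc => absurd (hB (Or.inl hc)) (not_le.mpr hpB)
      have : ¬ (p ∈ Ms ∧ (∀ y ∈ a.erase p, y < p) ∧ ¬ Rejects F Ms (insert p (a.erase p))) := by
        intro hc
        apply hkey
        rw [hbaddef]
        refine Set.mem_biUnion ?_ hc
        exact_mod_cast Finset.mem_powerset.mpr ha'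
      have hgt : ∀ y ∈ a.erase p, y < p := by
        intro y hy
        exact lt_of_le_of_lt (hB (Or.inr (ha' hy))) hpB
      have hrej' : Rejects F Ms (insert p (a.erase p)) := by
        by_contra hc
        exact this ⟨hpMs, hgt, hc⟩
      rwa [Finset.insert_erase hpa] at hrej'
    · exact hrej a (fun x hx => by
        rcases Finset.mem_insert.mp (ha hx) with rfl | h
        · exact absurd hx hpa
        · exact h)

open scoped Classical in
noncomputable def extStep (F : Set (Finset ℕ)) (Ms : Set ℕ) (s : ℕ × Finset ℕ) : ℕ × Finset ℕ :=
  if h : ∃ s', ExtStepRel F Ms s s' then h.choose else s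

/-- L7: extraction in the rejecting case. -/
lemma extraction {Ms : Set ℕ} (hMsInf : Ms.Infinite)
    (hmaster : ∀ a : Finset ℕ, ↑a ⊆ Ms → Decides F Ms a)
    (hrej0 : Rejects F Ms ∅) :
    ∃ M ⊆ Ms, M.Infinite ∧ ∀ a : Finset ℕ, ↑a ⊆ M → a ∉ F := by
  classical
  set chain : ℕ → ℕ × Finset ℕ := fun k => (extStep F Ms)^[k] (0, ∅) with hchaindef
  have hinv : ∀ k, ↑(chain k).2 ⊆ Ms ∧ (∀ a : Finset ℕ, a ⊆ (chain k).2 → Rejects F Ms a) := by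
    intro k; induction k with
    | zero =>
      constructor
      · simp [hchaindef]
      · intro a ha
        have : a = ∅ := Finset.subset_empty.mp (by simpa [hchaindef] using ha)
        rwa [this]
    | succ k ih =>
      have hex : ∃ s', ExtStepRel F Ms (chain k) s' := extStep_exists hMsInf hmaster _ ih.1 ih.2
      have hstep : chain (k+1) = extStep F Ms (chain k) := by
        simp only [hchaindef, Function.iterate_succ_apply']
      have hrel : ExtStepRel F Ms (chain k) (chain (k+1)) := by
        rw [hstep, extStep, dif_pos hex]; exact hex.choose_spec
      constructor
      · rw [hrel.1]
        intro x hx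
        rcases Finset.mem_insert.mp (by exact_mod_cast hx) with rfl | h
        · exact hrel.2.1
        · exact ih.1 h
      · exact hrel.2.2.2
  have hrel : ∀ k, ExtStepRel F Ms (chain k) (chain (k+1)) := by
    intro k
    have hex : ∃ s', ExtStepRel F Ms (chain k) s' :=
      extStep_exists hMsInf hmaster _ (hinv k).1 (hinv k).2
    have hstep : chain (k+1) = extStep F Ms (chain k) := by
      simp only [hchaindef, Function.iterate_succ_apply']
    rw [hstep, extStep, dif_pos hex]; exact hex.choose_spec
  set q : ℕ → ℕ := fun k => (chain (k+1)).1 with hqdef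
  have hhist : ∀ k, (chain k).2 = (Finset.range k).image q := by
    intro k; induction k with
    | zero => simp [hchaindef]
    | succ k ih =>
      rw [(hrel k).1, ih, Finset.range_add_one, Finset.image_insert]
  have hqmono : StrictMono q := by
    apply strictMono_nat_of_lt_succ
    intro k
    apply (hrel (k+1)).2.2.1
    rw [hhist (k+1)]
    exact Finset.mem_image.mpr ⟨k, Finset.self_mem_range_succ k, rfl⟩
  have hqMs : ∀ k, q k ∈ Ms := fun k => (hrel k).2.1
  refine ⟨Set.range q, by rintro x ⟨k, rfl⟩; exact hqMs k,
    Set.infinite_range_of_injective hqmono.injective, ?_⟩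
  intro a ha haF
  -- a ⊆ range q, find k with a ⊆ hist
  have hrejA : Rejects F Ms a := by
    rcases Finset.eq_empty_or_nonempty a with rfl | hne
    · exact hrej0
    · obtain ⟨i, hi⟩ : ∃ i, a.max' hne = q i := by
        rcases ha (a.max'_mem hne) with ⟨i, hi⟩; exact ⟨i, hi.symm⟩
      have hsub : a ⊆ (chain (i+1)).2 := by
        intro x hx
        rcases ha hx with ⟨j, hj⟩
        have : q j ≤ q i := by rw [hj, ← hi]; exact a.le_max' x hx
        have hji : j ≤ i := by
          by_contra hc
          exact absurd (hqmono (Nat.lt_of_not_le hc)) (not_lt.mpr this)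
        rw [hhist (i+1), ← hj]
        exact Finset.mem_image.mpr ⟨j, Finset.mem_range.mpr (Nat.lt_succ_of_le hji), rfl⟩
      exact (hinv (i+1)).2 a hsub
  exact hrejA Ms subset_rfl hMsInf (mem_F_accepts haF Ms)

/-- The Nash–Williams theorem. -/
theorem nashWilliams (F : Set (Finset ℕ)) (M0 : Set ℕ) (hM0 : M0.Infinite) :
    ∃ M ⊆ M0, M.Infinite ∧
      ((∀ a : Finset ℕ, ↑a ⊆ M → a ∉ F) ∨
       (∀ N ⊆ M, N.Infinite → ∃ a ∈ F, IsInitSeg a N)) := by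
  rcases fusion (F := F) M0 hM0 with ⟨Ms, hMsM0, hMsInf, hmaster⟩
  rcases hmaster ∅ (by simp) with hacc | hrej
  · refine ⟨Ms, hMsM0, hMsInf, Or.inr ?_⟩
    intro N hN hNi
    rcases hacc N hNi hN (by simp) with ⟨b, hbF, hbinit⟩
    refine ⟨b, hbF, ?_⟩
    simpa using hbinit
  · rcases extraction hMsInf hmaster hrej with ⟨M, hMMs, hMi, hgood⟩
    exact ⟨M, hMMs.trans hMsM0, hMi, Or.inl hgood⟩

end NW
end
section
namespace NW
variable {S : Type*}

/-- Alternating membership: with `π = false` the head must be in `A`, then alternate. -/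
def altMem (A B : ℕ → Set S) : Bool → S → List ℕ → Prop
  | _, _, [] => True
  | π, t, c :: l => t ∈ (cond π (B c) (A c)) ∧ altMem A B (!π) t l

/-- The padded block list. -/
def blist (p : ℕ → Bool) (d e : ℕ → ℕ) : ℕ → ℕ → Bool → List ℕ
  | 0, _, _ => []
  | (fuel+1), j, π =>
    if π = p j then e j :: blist p d e fuel (j+1) (!π)
    else d j :: e j :: blist p d e fuel (j+1) π

variable {A B : ℕ → Set S} {p : ℕ → Bool} {d e : ℕ → ℕ}

lemma blist_mem_target :
    ∀ (fuel j : ℕ) (π : Bool) (t : S), altMem A B π t (blist p d e fuel j π) →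
      ∀ i, j ≤ i → i < j + fuel → t ∈ (cond (p i) (B (e i)) (A (e i))) := by
  intro fuel
  induction fuel with
  | zero => intro j π t _ i h1 h2; omega
  | succ fuel ih =>
    intro j π t hmem i h1 h2
    rw [blist] at hmem
    by_cases hπ : π = p j
    · rw [if_pos hπ] at hmem
      rcases hmem with ⟨hhead, htail⟩
      by_cases hij : i = j
      · rw [hij, ← hπ]; exact hhead
      · exact ih (j+1) (!π) t htail i (by omega) (by omega)
    · rw [if_neg hπ] at hmem
      rcases hmem with ⟨_, hhead, htail⟩
      rw [Bool.not_not] at htail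
      by_cases hij : i = j
      · have hb : (!π) = p j := by
          cases π <;> cases hpj : p j <;> simp_all
        rw [hij, ← hb]; exact hhead
      · exact ih (j+1) π t htail i (by omega) (by omega)

lemma blist_sorted (hde : ∀ j, d j < e j) (hed : ∀ j, e j < d (j+1)) :
    ∀ (fuel j : ℕ) (π : Bool),
      List.IsChain (· < ·) (blist p d e fuel j π) ∧
      ∀ x ∈ blist p d e fuel j π, d j ≤ x := by
  intro fuel
  induction fuel with
  | zero => intro j π; constructor <;> simp [blist]
  | succ fuel ih =>
    intro j π
    have key : ∀ (π' : Bool), (∀ y ∈ (blist p d e fuel (j+1) π').head?, e j < y) := by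
      intro π' y hy
      have hmem := List.mem_of_mem_head? hy
      have := (ih (j+1) π').2 y hmem
      exact lt_of_lt_of_le (hed j) this
    rw [blist]
    by_cases hπ : π = p j
    · rw [if_pos hπ]
      refine ⟨List.isChain_cons.mpr ⟨key (!π), (ih (j+1) (!π)).1⟩, ?_⟩
      intro x hx
      rcases List.mem_cons.mp hx with rfl | hx'
      · exact le_of_lt (hde j)
      · exact le_of_lt (lt_of_lt_of_le (lt_trans (hde j) (hed j)) ((ih (j+1) (!π)).2 x hx'))
    · rw [if_neg hπ]
      refine ⟨?_, ?_⟩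
      · refine List.isChain_cons.mpr ⟨?_, List.isChain_cons.mpr ⟨key π, (ih (j+1) π).1⟩⟩
        intro y hy
        have hye : e j = y := by simpa using hy
        rw [← hye]; exact hde j
      · intro x hx
        rcases List.mem_cons.mp hx with rfl | hx'
        · exact le_rfl
        rcases List.mem_cons.mp hx' with rfl | hx''
        · exact le_of_lt (hde j)
        · exact le_of_lt (lt_of_lt_of_le (lt_trans (hde j) (hed j)) ((ih (j+1) π).2 x hx''))

lemma blist_subset_M {M : Set ℕ} (hd : ∀ j, d j ∈ M) (he : ∀ j, e j ∈ M) :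
    ∀ (fuel j : ℕ) (π : Bool), ∀ x ∈ blist p d e fuel j π, x ∈ M := by
  intro fuel
  induction fuel with
  | zero => intro j π; simp [blist]
  | succ fuel ih =>
    intro j π x hx
    rw [blist] at hx
    by_cases hπ : π = p j
    · rw [if_pos hπ] at hx
      rcases List.mem_cons.mp hx with rfl | hx'
      · exact he j
      · exact ih (j+1) (!π) x hx'
    · rw [if_neg hπ] at hx
      rcases List.mem_cons.mp hx with rfl | hx'
      · exact hd j
      rcases List.mem_cons.mp hx' with rfl | hx''
      · exact he j
      · exact ih (j+1) π x hx''

/-- sort of the toFinset of a `<`-sorted list is the list itself. -/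
lemma sort_toFinset_self {l : List ℕ} (hl : List.Pairwise (· < ·) l) :
    Finset.sort l.toFinset (· ≤ ·) = l := by
  have hnd : l.Nodup := hl.nodup
  exact (List.toFinset_sort (r := (· ≤ ·)) hnd).mpr (hl.imp le_of_lt)

end NW
end
section
namespace NW
variable {S : Type*}

noncomputable def altSeq (Sf : ℕ → Set ℕ) (hSf : ∀ k, (Sf k).Infinite) : ℕ → ℕ
  | 0 => ((hSf 0).exists_gt 0).choose
  | (k+1) => ((hSf (k+1)).exists_gt (altSeq Sf hSf k)).choose

lemma altSeq_mem (Sf : ℕ → Set ℕ) (hSf : ∀ k, (Sf k).Infinite) (k : ℕ) :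
    altSeq Sf hSf k ∈ Sf k := by
  cases k with
  | zero => exact ((hSf 0).exists_gt 0).choose_spec.1
  | succ k => exact ((hSf (k+1)).exists_gt (altSeq Sf hSf k)).choose_spec.1

lemma altSeq_strictMono (Sf : ℕ → Set ℕ) (hSf : ∀ k, (Sf k).Infinite) :
    StrictMono (altSeq Sf hSf) := by
  apply strictMono_nat_of_lt_succ
  intro k
  exact ((hSf (k+1)).exists_gt (altSeq Sf hSf k)).choose_spec.2

lemma altMem_of_alternating {A B : ℕ → Set S} {t : S} {ν : ℕ → ℕ}
    (hν : ∀ k, (k % 2 = 0 → t ∈ A (ν k)) ∧ (k % 2 = 1 → t ∈ B (ν k))) :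
    ∀ (c s : ℕ), altMem A B (decide (s % 2 = 1)) t (List.map ν (List.range' s c 1)) := by
  intro c
  induction c with
  | zero => intro s; simp [List.range', altMem]
  | succ c ih =>
    intro s
    rw [List.range'_succ, List.map_cons]
    refine ⟨?_, ?_⟩
    · rcases Nat.mod_two_eq_zero_or_one s with h | h
      · have : decide (s % 2 = 1) = false := by simp [h]
        rw [this]
        simpa using (hν s).1 h
      · have : decide (s % 2 = 1) = true := by simp [h]
        rw [this]
        simpa using (hν s).2 h
    · have hpar : (!decide (s % 2 = 1)) = decide ((s+1) % 2 = 1) := by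
        rcases Nat.mod_two_eq_zero_or_one s with h | h <;>
          simp [h, Nat.succ_mod_two_eq_one_iff, Nat.succ_mod_two_eq_zero_iff]
      rw [hpar]
      exact ih (s+1)

theorem pairsDichotomy (A B : ℕ → Set S) :
    (∃ σ : ℕ → ℕ, StrictMono σ ∧ ∀ t : S, {n | t ∈ A (σ n)}.Finite ∨ {n | t ∈ B (σ n)}.Finite) ∨
    (∃ σ : ℕ → ℕ, StrictMono σ ∧ ∀ (k : ℕ) (η : ℕ → Bool), ∃ t : S,
      ∀ j, j < k → (η j = true → t ∈ A (σ j)) ∧ (η j = false → t ∈ B (σ j))) := by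
  classical
  set F : Set (Finset ℕ) := {a | ¬ ∃ t : S, altMem A B false t (Finset.sort a (· ≤ ·))} with hF
  obtain ⟨M, -, hMi, hcase⟩ := nashWilliams F Set.univ Set.infinite_univ
  have hMi' : {n | n ∈ M}.Infinite := hMi
  set nthM : ℕ → ℕ := Nat.nth (· ∈ M) with hnthdef
  have hnthMono : StrictMono nthM := Nat.nth_strictMono hMi'
  have hnthMem : ∀ n, nthM n ∈ M := fun n => Nat.nth_mem_of_infinite hMi' n
  rcases hcase with hind | hconv
  · -- independence branch
    right
    set d : ℕ → ℕ := fun j => nthM (4*j) with hd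
    set e : ℕ → ℕ := fun j => nthM (4*j+1) with he
    have hemono : StrictMono e := by
      intro i j hij
      simp only [he]
      exact hnthMono (by omega)
    have hde : ∀ j, d j < e j := by
      intro j; simp only [hd, he]; exact hnthMono (by omega)
    have hed : ∀ j, e j < d (j+1) := by
      intro j; simp only [hd, he]; exact hnthMono (by omega)
    refine ⟨e, hemono, ?_⟩
    intro k η
    set p : ℕ → Bool := fun j => !(η j) with hp
    set L := blist p d e k 0 false with hL
    have hsort := blist_sorted (p := p) hde hed k 0 false
    have hLsorted : List.Pairwise (· < ·) L := List.isChain_iff_pairwise.mp hsort.1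
    have hLM : ∀ x ∈ L, x ∈ M :=
      blist_subset_M (M := M) (fun j => by simp only [hd]; exact hnthMem _)
        (fun j => by simp only [he]; exact hnthMem _) k 0 false
    have hLF : L.toFinset ∉ F :=
      hind L.toFinset (by intro x hx; exact hLM x (List.mem_toFinset.mp hx))
    simp only [hF, Set.mem_setOf_eq, not_not] at hLF
    rw [sort_toFinset_self hLsorted] at hLF
    obtain ⟨t, ht⟩ := hLF
    refine ⟨t, fun j hj => ?_⟩
    have hmem := blist_mem_target k 0 false t ht j (Nat.zero_le j) (by omega)
    constructor
    · intro hη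
      have hpj : p j = false := by simp [hp, hη]
      rw [hpj] at hmem
      simpa using hmem
    · intro hη
      have hpj : p j = true := by simp [hp, hη]
      rw [hpj] at hmem
      simpa using hmem
  · -- convergence branch
    left
    refine ⟨nthM, hnthMono, ?_⟩
    intro t
    by_contra hboth
    push_neg at hboth
    have hAinf : {n | t ∈ A (nthM n)}.Infinite := by
      tauto
    have hBinf : {n | t ∈ B (nthM n)}.Infinite := by
      tauto
    have hAinf' : {m | m ∈ M ∧ t ∈ A m}.Infinite := by
      have himg := hAinf.image (Set.injOn_of_injective hnthMono.injective)
      apply himg.mono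
      rintro x ⟨n, hn, rfl⟩
      exact ⟨hnthMem n, hn⟩
    have hBinf' : {m | m ∈ M ∧ t ∈ B m}.Infinite := by
      have himg := hBinf.image (Set.injOn_of_injective hnthMono.injective)
      apply himg.mono
      rintro x ⟨n, hn, rfl⟩
      exact ⟨hnthMem n, hn⟩
    set Sf : ℕ → Set ℕ := fun k =>
      if k % 2 = 0 then {m | m ∈ M ∧ t ∈ A m} else {m | m ∈ M ∧ t ∈ B m} with hSfdef
    have hSf : ∀ k, (Sf k).Infinite := by
      intro k; rw [hSfdef]; dsimp only; split <;> assumption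
    set ν := altSeq Sf hSf with hν
    have hνmono : StrictMono ν := altSeq_strictMono Sf hSf
    have hνmem : ∀ k, ν k ∈ Sf k := altSeq_mem Sf hSf
    have hνM : ∀ k, ν k ∈ M := by
      intro k
      have := hνmem k
      rw [hSfdef] at this; dsimp only at this
      rcases Nat.mod_two_eq_zero_or_one k with h | h
      · rw [if_pos h] at this; exact this.1
      · rw [if_neg (by omega)] at this; exact this.1
    have hNM : Set.range ν ⊆ M := by rintro x ⟨k, rfl⟩; exact hνM k
    have hNinf : (Set.range ν).Infinite := Set.infinite_range_of_injective hνmono.injective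
    obtain ⟨a, haF, hainit⟩ := hconv (Set.range ν) hNM hNinf
    -- derive a contradiction: a ∉ F
    have hnotF : a ∉ F := by
      rcases Finset.eq_empty_or_nonempty a with rfl | hne
      · simp only [hF, Set.mem_setOf_eq, not_not, Finset.sort_empty]
        exact ⟨t, trivial⟩
      · obtain ⟨i, hi⟩ : ∃ i, a.max' hne = ν i := by
          rcases hainit.1 (a.max'_mem hne) with ⟨i, hi⟩; exact ⟨i, hi.symm⟩
        have hdc : ∀ j, ν j ∈ a → ∀ j' ≤ j, ν j' ∈ a := by
          intro j hj j' hj'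
          by_contra hc
          have hlt := hainit.2 (ν j') ⟨j', rfl⟩ hc (ν j) hj
          exact absurd (hνmono.lt_iff_lt.mp hlt) (by omega)
        have hkey : a = ((List.range (i+1)).map ν).toFinset := by
          ext x
          simp only [List.mem_toFinset, List.mem_map, List.mem_range]
          constructor
          · intro hx
            rcases hainit.1 hx with ⟨j, hj⟩
            refine ⟨j, ?_, hj⟩
            have hle : ν j ≤ ν i := by
              rw [← hi, hj]; exact a.le_max' x hx
            have := hνmono.le_iff_le.mp hle
            omega
          · rintro ⟨j, hj, rfl⟩
            exact hdc i (hi ▸ a.max'_mem hne) j (by omega)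
        have hlsort : List.Pairwise (· < ·) ((List.range (i+1)).map ν) :=
          List.Pairwise.map ν (fun a b h => hνmono h) List.pairwise_lt_range
        simp only [hF, Set.mem_setOf_eq, not_not]
        refine ⟨t, ?_⟩
        rw [hkey, sort_toFinset_self hlsort]
        have hνprop : ∀ k, (k % 2 = 0 → t ∈ A (ν k)) ∧ (k % 2 = 1 → t ∈ B (ν k)) := by
          intro k
          have hm := hνmem k
          rw [hSfdef] at hm; dsimp only at hm
          constructor
          · intro h; rw [if_pos h] at hm; exact hm.2
          · intro h; rw [if_neg (by omega)] at hm; exact hm.2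
        have halt := altMem_of_alternating (A := A) (B := B) hνprop (i+1) 0
        rw [List.range_eq_range']
        simpa using halt
    exact hnotF haF

end NW
end
section
namespace NW
open Filter Topology

lemma tendsto_of_no_rational_gap {u : ℕ → ℝ} {b : ℝ} (hb : ∀ n, |u n| ≤ b)
    (h : ∀ r s : ℚ, r < s →
      ¬ ({n | u n ≤ (r:ℝ)}.Infinite ∧ {n | (s:ℝ) ≤ u n}.Infinite)) :
    ∃ l, Tendsto u atTop (𝓝 l) := by
  have hbdd1 : IsBoundedUnder (· ≤ ·) atTop u :=
    Filter.isBoundedUnder_of ⟨b, fun n => (abs_le.mp (hb n)).2⟩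
  have hbdd2 : IsBoundedUnder (· ≥ ·) atTop u :=
    Filter.isBoundedUnder_of ⟨-b, fun n => (abs_le.mp (hb n)).1⟩
  have hco1 : IsCoboundedUnder (· ≥ ·) atTop u := hbdd1.isCoboundedUnder_ge
  have hco2 : IsCoboundedUnder (· ≤ ·) atTop u := hbdd2.isCoboundedUnder_le
  have hle : liminf u atTop ≤ limsup u atTop := liminf_le_limsup hbdd1 hbdd2
  rcases eq_or_lt_of_le hle with heq | hlt
  · exact ⟨liminf u atTop, tendsto_of_liminf_eq_limsup rfl heq.symm hbdd1 hbdd2⟩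
  · exfalso
    obtain ⟨r, hr1, hr2⟩ := exists_rat_btwn hlt
    obtain ⟨s, hs1, hs2⟩ := exists_rat_btwn hr2
    apply h r s (by exact_mod_cast hs1)
    constructor
    · have hfreq : ∃ᶠ n in atTop, u n < (r:ℝ) := frequently_lt_of_liminf_lt hco1 hr1
      have h2 : {n | u n < (r:ℝ)}.Infinite := Nat.frequently_atTop_iff_infinite.mp hfreq
      apply h2.mono
      intro n hn
      simp only [Set.mem_setOf_eq] at hn ⊢
      exact le_of_lt hn
    · have hfreq : ∃ᶠ n in atTop, (s:ℝ) < u n := frequently_lt_of_lt_limsup hco2 hs2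
      have h2 : {n | (s:ℝ) < u n}.Infinite := Nat.frequently_atTop_iff_infinite.mp hfreq
      apply h2.mono
      intro n hn
      simp only [Set.mem_setOf_eq] at hn ⊢
      exact le_of_lt hn

theorem rosenthalDichotomy {S : Type*} (f : ℕ → S → ℝ) (hb : ∀ t : S, ∃ b, ∀ n, |f n t| ≤ b) :
    (∃ σ : ℕ → ℕ, StrictMono σ ∧ ∀ t, ∃ l, Tendsto (fun n => f (σ n) t) atTop (𝓝 l)) ∨
    (∃ r s : ℝ, r < s ∧ ∃ σ : ℕ → ℕ, StrictMono σ ∧ ∀ (k : ℕ) (η : ℕ → Bool), ∃ t,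
      ∀ j, j < k → (η j = true → f (σ j) t ≤ r) ∧ (η j = false → s ≤ f (σ j) t)) := by
  classical
  by_cases hind : ∃ r s : ℝ, r < s ∧ ∃ σ : ℕ → ℕ, StrictMono σ ∧
      ∀ (k : ℕ) (η : ℕ → Bool), ∃ t,
        ∀ j, j < k → (η j = true → f (σ j) t ≤ r) ∧ (η j = false → s ≤ f (σ j) t)
  · exact Or.inr hind
  left
  -- stage lemma
  have hstage : ∀ g : ℕ → ℕ, StrictMono g → ∀ r s : ℚ, (r:ℝ) < (s:ℝ) →
      ∃ σ' : ℕ → ℕ, StrictMono σ' ∧ ∀ t,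
        {n | f (g (σ' n)) t ≤ (r:ℝ)}.Finite ∨ {n | (s:ℝ) ≤ f (g (σ' n)) t}.Finite := by
    intro g hg r s hrs
    rcases pairsDichotomy (fun n => {t | f (g n) t ≤ (r:ℝ)})
        (fun n => {t | (s:ℝ) ≤ f (g n) t}) with ⟨σ', hσ', hconv⟩ | ⟨σ', hσ', hindep⟩
    · exact ⟨σ', hσ', fun t => hconv t⟩
    · exact absurd ⟨(r:ℝ), (s:ℝ), hrs, g ∘ σ', hg.comp hσ', fun k η => by
        obtain ⟨t, ht⟩ := hindep k η
        exact ⟨t, fun j hj => ⟨fun hη => (ht j hj).1 hη, fun hη => (ht j hj).2 hη⟩⟩⟩ hind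
  -- enumerate rational pairs
  set q : ℕ → ℚ × ℚ := ⇑(Denumerable.eqv (ℚ × ℚ)).symm with hq
  have hqsurj : ∀ p : ℚ × ℚ, ∃ n, q n = p := (Denumerable.eqv (ℚ × ℚ)).symm.surjective
  -- chain of subsequences
  set step : ℕ → {g : ℕ → ℕ // StrictMono g} → {g : ℕ → ℕ // StrictMono g} := fun k g =>
    if h : ((q k).1 : ℝ) < ((q k).2 : ℝ) then
      ⟨g.1 ∘ (hstage g.1 g.2 (q k).1 (q k).2 h).choose,
        g.2.comp (hstage g.1 g.2 (q k).1 (q k).2 h).choose_spec.1⟩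
    else g with hstep
  set G : ℕ → {g : ℕ → ℕ // StrictMono g} :=
    fun k => Nat.rec ⟨id, strictMono_id⟩ step k with hG
  have hGsucc : ∀ k, G (k+1) = step k (G k) := fun k => rfl
  have hGprop : ∀ k, ((q k).1 : ℝ) < ((q k).2 : ℝ) → ∀ t,
      {n | f ((G (k+1)).1 n) t ≤ ((q k).1:ℝ)}.Finite ∨
      {n | ((q k).2:ℝ) ≤ f ((G (k+1)).1 n) t}.Finite := by
    intro k h t
    rw [hGsucc k, hstep]
    simp only [dif_pos h]
    exact (hstage (G k).1 (G k).2 (q k).1 (q k).2 h).choose_spec.2 t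
  have hfact1 : ∀ k n, ∃ m, n ≤ m ∧ (G (k+1)).1 n = (G k).1 m := by
    intro k n
    rw [hGsucc k, hstep]
    by_cases h : ((q k).1 : ℝ) < ((q k).2 : ℝ)
    · simp only [dif_pos h]
      exact ⟨(hstage (G k).1 (G k).2 (q k).1 (q k).2 h).choose n,
        ((hstage (G k).1 (G k).2 (q k).1 (q k).2 h).choose_spec.1).le_apply, rfl⟩
    · simp only [dif_neg h]
      exact ⟨n, le_rfl, rfl⟩
  have hfact : ∀ k k', k ≤ k' → ∀ n, ∃ m, n ≤ m ∧ (G k').1 n = (G k).1 m := by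
    intro k k' hkk'
    induction k' with
    | zero =>
      have : k = 0 := Nat.le_zero.mp hkk'
      subst this; exact fun n => ⟨n, le_rfl, rfl⟩
    | succ k' ih =>
      rcases Nat.lt_or_ge k (k'+1) with h | h
      · intro n
        obtain ⟨m1, hm1, he1⟩ := hfact1 k' n
        obtain ⟨m2, hm2, he2⟩ := ih (Nat.lt_succ_iff.mp h) m1
        exact ⟨m2, le_trans hm1 hm2, by rw [he1, he2]⟩
      · have : k = k' + 1 := le_antisymm hkk' h
        subst this; exact fun n => ⟨n, le_rfl, rfl⟩
  set D : ℕ → ℕ := fun k => (G k).1 k with hD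
  have hDmono : StrictMono D := by
    apply strictMono_nat_of_lt_succ
    intro k
    obtain ⟨m, hm, he⟩ := hfact1 k (k+1)
    rw [hD]; dsimp only
    rw [he]
    exact (G k).2 (lt_of_lt_of_le (Nat.lt_succ_self k) hm)
  refine ⟨D, hDmono, ?_⟩
  intro t
  obtain ⟨b, hbt⟩ := hb t
  apply tendsto_of_no_rational_gap (fun n => hbt (D n))
  intro r s hrs hcontra
  obtain ⟨k, hk⟩ := hqsurj (r, s)
  have hrs' : ((q k).1 : ℝ) < ((q k).2 : ℝ) := by rw [hk]; exact_mod_cast hrs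
  have hprop := hGprop k hrs' t
  rw [hk] at hprop
  -- transfer infinite sets along the factorization
  have htrans : ∀ P : ℝ → Prop, {n | P (f (D n) t)}.Infinite →
      {n | P (f ((G (k+1)).1 n) t)}.Infinite := by
    intro P hP
    set h' : ℕ → ℕ := fun n => if hn : k+1 ≤ n then (hfact (k+1) n hn n).choose else 0 with hh'
    have hspec : ∀ n, k+1 ≤ n → n ≤ h' n ∧ (G n).1 n = (G (k+1)).1 (h' n) := by
      intro n hn
      rw [hh']; dsimp only; rw [dif_pos hn]
      exact ⟨(hfact (k+1) n hn n).choose_spec.1, (hfact (k+1) n hn n).choose_spec.2⟩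
    have hA : ({n | P (f (D n) t)} ∩ {n | k+1 ≤ n}).Infinite := by
      have hdiff := hP.diff (Set.finite_Iic k)
      apply hdiff.mono
      intro n hn
      have h2 : ¬ n ≤ k := by simpa using hn.2
      exact ⟨hn.1, by simp only [Set.mem_setOf_eq]; omega⟩
    have himg := hA.image (f := h') ?_
    · apply himg.mono
      rintro x ⟨n, ⟨hn1, hn2⟩, rfl⟩
      have := (hspec n hn2).2
      simp only [Set.mem_setOf_eq]
      rw [← this]
      exact hn1
    · intro n hn n' hn' hEq
      have h1 := (hspec n hn.2).2
      have h2 := (hspec n' hn'.2).2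
      have : D n = D n' := by rw [hD]; dsimp only; rw [h1, h2, hEq]
      exact hDmono.injective this
  rcases hprop with hfin | hfin
  · exact (htrans (fun x => x ≤ (r:ℝ)) hcontra.1) hfin
  · exact (htrans (fun x => (s:ℝ) ≤ x) hcontra.2) hfin

end NW
end
section
open Filter Topology
namespace NW

lemma exists_weakCauchy_subseq {X : Type*} [NormedAddCommGroup X] [NormedSpace ℝ X]
    (hl1 : ¬ CLG.ContainsL1Copy X) (x : ℕ → X) (b : ℝ) (hx : ∀ n, ‖x n‖ ≤ b) :
    ∃ σ : ℕ → ℕ, StrictMono σ ∧ ∀ φ : X →L[ℝ] ℝ,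
      ∃ l, Tendsto (fun n => φ (x (σ n))) atTop (𝓝 l) := by
  classical
  set S := {φ : X →L[ℝ] ℝ // ‖φ‖ ≤ 1} with hS
  set f : ℕ → S → ℝ := fun n φ => φ.1 (x n) with hf
  have hfb : ∀ t : S, ∃ c, ∀ n, |f n t| ≤ c := by
    intro t
    refine ⟨b, fun n => ?_⟩
    calc |t.1 (x n)| = ‖t.1 (x n)‖ := (Real.norm_eq_abs _).symm
      _ ≤ ‖t.1‖ * ‖x n‖ := t.1.le_opNorm _
      _ ≤ 1 * b := by
          apply mul_le_mul t.2 (hx n) (norm_nonneg _) zero_le_one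
      _ = b := one_mul b
  rcases rosenthalDichotomy f hfb with ⟨σ, hσ, hconv⟩ | ⟨r, s, hrs, σ, hσ, hindep⟩
  · refine ⟨σ, hσ, ?_⟩
    intro φ
    by_cases hφ : φ = 0
    · exact ⟨0, by simp [hφ, tendsto_const_nhds]⟩
    · have hnφ : ‖φ‖ ≠ 0 := by simpa using hφ
      set ψ : X →L[ℝ] ℝ := ‖φ‖⁻¹ • φ with hψ
      have hψ1 : ‖ψ‖ ≤ 1 := by
        rw [hψ]
        calc ‖‖φ‖⁻¹ • φ‖ ≤ ‖(‖φ‖⁻¹ : ℝ)‖ * ‖φ‖ := ContinuousLinearMap.opNorm_smul_le _ _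
          _ = ‖φ‖⁻¹ * ‖φ‖ := by
              rw [Real.norm_eq_abs, abs_of_nonneg (inv_nonneg.mpr (norm_nonneg _))]
          _ = 1 := inv_mul_cancel₀ hnφ
      obtain ⟨l, hl⟩ := hconv ⟨ψ, hψ1⟩
      refine ⟨‖φ‖ * l, ?_⟩
      have heq : (fun n => φ (x (σ n))) = fun n => ‖φ‖ * (ψ (x (σ n))) := by
        funext n
        rw [hψ]
        simp [ContinuousLinearMap.smul_apply, mul_inv_cancel₀ hnφ, mul_assoc]
        rw [← mul_assoc, mul_inv_cancel₀ hnφ, one_mul]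
      rw [heq]
      exact hl.const_mul _
  · exfalso
    apply hl1
    have hb0 : 0 ≤ b := le_trans (norm_nonneg _) (hx 0)
    have hsr : 0 < (s - r)/2 := by linarith
    refine ⟨fun n => x (σ n), (s - r)/2, b + 1, hsr, by linarith, ?_⟩
    intro k a
    constructor
    · -- lower ℓ₁ bound
      set η : ℕ → Bool := fun j => if h : j < k then decide (a ⟨j, h⟩ < 0) else true with hη
      obtain ⟨t₁, ht₁⟩ := hindep k η
      obtain ⟨t₂, ht₂⟩ := hindep k (fun j => !(η j))
      set v := ∑ i : Fin k, a i • x (σ i) with hv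
      have hkey : (t₁.1 - t₂.1) v = ∑ i : Fin k, a i * (t₁.1 (x (σ i)) - t₂.1 (x (σ i))) := by
        rw [hv, map_sum]
        congr 1
        funext i
        simp [ContinuousLinearMap.sub_apply, mul_sub]
      have hterm : ∀ i : Fin k, |a i| * (s - r) ≤ a i * (t₁.1 (x (σ i)) - t₂.1 (x (σ i))) := by
        intro i
        have hik : (i : ℕ) < k := i.2
        have hηi : η i = decide (a i < 0) := by
          rw [hη]; dsimp only; rw [dif_pos hik]
        by_cases hai : a i < 0
        · have h1 : η i = true := by rw [hηi]; simpa using hai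
          have hA := (ht₁ i hik).1 h1
          have hB := (ht₂ i hik).2 (by simp [h1])
          -- hA : f (σ i) t₁ ≤ r, hB : s ≤ f (σ i) t₂
          have : t₁.1 (x (σ i)) - t₂.1 (x (σ i)) ≤ r - s := by
            have hA' : t₁.1 (x (σ i)) ≤ r := hA
            have hB' : s ≤ t₂.1 (x (σ i)) := hB
            linarith
          have habs : |a i| = -(a i) := abs_of_neg hai
          nlinarith [this, hai]
        · have h1 : η i = false := by rw [hηi]; simpa using hai
          have hB := (ht₁ i hik).2 h1
          have hA := (ht₂ i hik).1 (by simp [h1])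
          have : s - r ≤ t₁.1 (x (σ i)) - t₂.1 (x (σ i)) := by
            have hA' : t₂.1 (x (σ i)) ≤ r := hA
            have hB' : s ≤ t₁.1 (x (σ i)) := hB
            linarith
          have hai' : 0 ≤ a i := le_of_not_gt hai
          have habs : |a i| = a i := abs_of_nonneg hai'
          nlinarith [this, hai']
      have hsum : (s - r) * (∑ i : Fin k, |a i|) ≤ (t₁.1 - t₂.1) v := by
        rw [hkey, Finset.mul_sum]
        apply Finset.sum_le_sum
        intro i _
        rw [mul_comm (s-r) _]
        exact hterm i
      have hnorm : (t₁.1 - t₂.1) v ≤ 2 * ‖v‖ := by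
        calc (t₁.1 - t₂.1) v ≤ |(t₁.1 - t₂.1) v| := le_abs_self _
          _ = ‖(t₁.1 - t₂.1) v‖ := (Real.norm_eq_abs _).symm
          _ ≤ ‖t₁.1 - t₂.1‖ * ‖v‖ := (t₁.1 - t₂.1).le_opNorm v
          _ ≤ 2 * ‖v‖ := by
              apply mul_le_mul_of_nonneg_right _ (norm_nonneg v)
              calc ‖t₁.1 - t₂.1‖ ≤ ‖t₁.1‖ + ‖t₂.1‖ := norm_sub_le _ _
                _ ≤ 1 + 1 := add_le_add t₁.2 t₂.2
                _ = 2 := by norm_num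
      linarith
    · -- upper bound
      calc ‖∑ i : Fin k, a i • x (σ i)‖ ≤ ∑ i : Fin k, ‖a i • x (σ i)‖ :=
            norm_sum_le _ _
        _ ≤ ∑ i : Fin k, |a i| * (b + 1) := by
            apply Finset.sum_le_sum
            intro i _
            rw [norm_smul, Real.norm_eq_abs]
            exact mul_le_mul_of_nonneg_left (by linarith [hx (σ i)]) (abs_nonneg _)
        _ = (b + 1) * ∑ i : Fin k, |a i| := by rw [← Finset.sum_mul, mul_comm]

end NW
end
section
open Filter Topology
namespace NW

/-- Halving bound: from block estimates to a global `k^(1/p)` estimate. -/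
lemma halving_bound {X : Type*} [NormedAddCommGroup X] {z : ℕ → X} {c p : ℝ}
    (hp : 1 < p) (hc : 0 ≤ c)
    (hblock : ∀ m m' : ℕ, m ≤ m' → m' ≤ 2*m →
      ‖∑ j ∈ Finset.Ico m m', z j‖ ≤ c * ((m' - m : ℕ) : ℝ) ^ (1/p)) :
    ∀ k : ℕ, ‖∑ j ∈ Finset.range k, z j‖ ≤
      ‖z 0‖ + (c / (1 - (3/4 : ℝ) ^ (1/p))) * (k:ℝ) ^ (1/p) := by
  have hp0 : 0 < 1/p := by positivity
  set θ : ℝ := (3/4 : ℝ) ^ (1/p) with hθ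
  have hθ0 : 0 < θ := Real.rpow_pos_of_pos (by norm_num) _
  have hθ1 : θ < 1 := Real.rpow_lt_one (by norm_num) (by norm_num) hp0
  have h1θ : 0 < 1 - θ := by linarith
  set B : ℝ := c / (1 - θ) with hB
  have hB0 : 0 ≤ B := div_nonneg hc (le_of_lt h1θ)
  have hBid : B * θ + c = B := by
    rw [hB]
    field_simp
    ring
  intro k
  induction k using Nat.strong_induction_on with
  | _ k ih =>
    match k with
    | 0 =>
      simp only [Finset.range_zero, Finset.sum_empty, norm_zero, Nat.cast_zero]
      have h0 : (0:ℝ) ^ (1/p) = 0 := Real.zero_rpow (ne_of_gt hp0)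
      rw [h0, mul_zero, add_zero]
      exact norm_nonneg _
    | 1 =>
      simp only [Finset.range_one, Finset.sum_singleton, Nat.cast_one]
      rw [Real.one_rpow]
      linarith [norm_nonneg (z 0)]
    | (k'+2) =>
      set k : ℕ := k' + 2 with hk
      set q : ℕ := (k + 1) / 2 with hq
      have hq1 : q < k := by omega
      have hq2 : k ≤ 2 * q := by omega
      have hq3 : q ≤ k := le_of_lt hq1
      have hsplit : ∑ j ∈ Finset.range k, z j =
          (∑ j ∈ Finset.range q, z j) + ∑ j ∈ Finset.Ico q k, z j :=
        (Finset.sum_range_add_sum_Ico z hq3).symm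
      have hIH := ih q hq1
      have hBlk := hblock q k hq3 hq2
      have hcast : ((k - q : ℕ) : ℝ) ≤ (k : ℝ) := by
        exact_mod_cast Nat.cast_le.mpr (Nat.sub_le k q)
      have hqk : (q : ℝ) ≤ (3/4) * (k : ℝ) := by
        have h4q : 4 * q ≤ 3 * k := by omega
        have hcast4 : (4:ℝ) * (q:ℝ) ≤ 3 * (k:ℝ) := by exact_mod_cast h4q
        linarith
      have hqpow : (q:ℝ) ^ (1/p) ≤ θ * (k:ℝ) ^ (1/p) := by
        calc (q:ℝ) ^ (1/p) ≤ ((3/4) * (k:ℝ)) ^ (1/p) :=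
              Real.rpow_le_rpow (Nat.cast_nonneg q) hqk (le_of_lt hp0)
          _ = θ * (k:ℝ) ^ (1/p) := by
              rw [Real.mul_rpow (by norm_num) (Nat.cast_nonneg k)]
      have hkpow : ((k - q : ℕ):ℝ) ^ (1/p) ≤ (k:ℝ) ^ (1/p) :=
        Real.rpow_le_rpow (Nat.cast_nonneg _) hcast (le_of_lt hp0)
      calc ‖∑ j ∈ Finset.range k, z j‖
          ≤ ‖∑ j ∈ Finset.range q, z j‖ + ‖∑ j ∈ Finset.Ico q k, z j‖ := by
            rw [hsplit]; exact norm_add_le _ _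
        _ ≤ (‖z 0‖ + B * (q:ℝ) ^ (1/p)) + c * ((k - q : ℕ):ℝ) ^ (1/p) :=
            add_le_add hIH hBlk
        _ ≤ (‖z 0‖ + B * (θ * (k:ℝ) ^ (1/p))) + c * (k:ℝ) ^ (1/p) := by
            have h1 : B * (q:ℝ) ^ (1/p) ≤ B * (θ * (k:ℝ) ^ (1/p)) :=
              mul_le_mul_of_nonneg_left hqpow hB0
            have h2 : c * ((k - q : ℕ):ℝ) ^ (1/p) ≤ c * (k:ℝ) ^ (1/p) :=
              mul_le_mul_of_nonneg_left hkpow hc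
            linarith
        _ = ‖z 0‖ + (B * θ + c) * (k:ℝ) ^ (1/p) := by ring
        _ = ‖z 0‖ + B * (k:ℝ) ^ (1/p) := by rw [hBid]

/-- Final decay: from a `A + B k^(1/p)` bound to Cesàro convergence to `0`. -/
lemma cesaro_decay {X : Type*} [NormedAddCommGroup X] [NormedSpace ℝ X] {T : ℕ → X}
    {A B p : ℝ} (hp : 1 < p) (hA : 0 ≤ A) (hB : 0 ≤ B)
    (hT : ∀ k : ℕ, ‖T k‖ ≤ A + B * (k:ℝ) ^ (1/p)) :
    Tendsto (fun k : ℕ => (k:ℝ)⁻¹ • T k) atTop (𝓝 0) := by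
  have hp0 : 0 < 1/p := by positivity
  apply squeeze_zero_norm' (a := fun k : ℕ => A * (k:ℝ)⁻¹ + B * (k:ℝ) ^ (1/p - 1))
  · filter_upwards [Filter.eventually_ge_atTop 1] with k hk
    have hk0 : (0:ℝ) < (k:ℝ) := by exact_mod_cast Nat.lt_of_lt_of_le Nat.zero_lt_one hk
    rw [norm_smul, Real.norm_eq_abs, abs_of_nonneg (inv_nonneg.mpr (le_of_lt hk0))]
    have h1 : (k:ℝ)⁻¹ * ‖T k‖ ≤ (k:ℝ)⁻¹ * (A + B * (k:ℝ) ^ (1/p)) :=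
      mul_le_mul_of_nonneg_left (hT k) (inv_nonneg.mpr (le_of_lt hk0))
    have h2 : (k:ℝ)⁻¹ * (A + B * (k:ℝ) ^ (1/p)) = A * (k:ℝ)⁻¹ + B * ((k:ℝ) ^ (1/p) * (k:ℝ)⁻¹) := by
      ring
    have h3 : (k:ℝ) ^ (1/p) * (k:ℝ)⁻¹ = (k:ℝ) ^ (1/p - 1) := by
      rw [Real.rpow_sub hk0, Real.rpow_one]
      ring
    rw [h2, h3] at h1
    exact h1
  · have t1 : Tendsto (fun k : ℕ => A * (k:ℝ)⁻¹) atTop (𝓝 0) := by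
      have := (tendsto_inv_atTop_nhds_zero_nat (𝕜 := ℝ)).const_mul A
      simpa using this
    have t2 : Tendsto (fun k : ℕ => B * (k:ℝ) ^ (1/p - 1)) atTop (𝓝 0) := by
      have hneg : 0 < 1 - 1/p := by
        have : 1/p < 1 := by
          rw [div_lt_one (lt_trans one_pos hp)]; exact hp
        linarith
      have hbase : Tendsto (fun x : ℝ => x ^ (-(1 - 1/p))) atTop (𝓝 0) :=
        tendsto_rpow_neg_atTop hneg
      have hcomp : Tendsto (fun k : ℕ => ((k:ℝ)) ^ (-(1 - 1/p))) atTop (𝓝 0) :=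
        hbase.comp tendsto_natCast_atTop_atTop
      have heq : (fun k : ℕ => ((k:ℝ)) ^ (-(1 - 1/p))) = fun k : ℕ => (k:ℝ) ^ (1/p - 1) := by
        funext k; congr 1; ring
      rw [heq] at hcomp
      have := hcomp.const_mul B
      simpa using this
    have := t1.add t2
    simpa using this

end NW
end

section
open Filter Topology
open CLG
/-- A Banach space with the `p`-Banach-Saks property (`1 < p < ∞`) containing no copy of
`ℓ₁` has the alternating Banach-Saks property. -/
theorem altBanachSaks_of_pBanachSaks
    {X : Type*} [NormedAddCommGroup X] [NormedSpace ℝ X] [CompleteSpace X]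
    (p : ℝ) (hp : 1 < p) (hBS : CLG.PBanachSaks X p) (hl1 : ¬ CLG.ContainsL1Copy X) :
    CLG.AltBanachSaks X := by
  classical
  intro x hxb
  obtain ⟨b, hb⟩ := hxb
  have hb0 : 0 ≤ b := le_trans (norm_nonneg _) (hb 0)
  obtain ⟨σ, hσ, hWC⟩ := NW.exists_weakCauchy_subseq hl1 x b hb
  set y : ℕ → X := fun j => x (σ (2*j+1)) - x (σ (2*j)) with hy
  have hyb : ∀ j, ‖y j‖ ≤ 2*b := by
    intro j
    simp only [hy]
    calc ‖x (σ (2*j+1)) - x (σ (2*j))‖ ≤ ‖x (σ (2*j+1))‖ + ‖x (σ (2*j))‖ := norm_sub_le _ _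
      _ ≤ 2*b := by linarith [hb (σ (2*j+1)), hb (σ (2*j))]
  have hmain : ∃ w : ℕ → ℕ, StrictMono w ∧ ∃ A Bc : ℝ, 0 ≤ A ∧ 0 ≤ Bc ∧
      ∀ m : ℕ, ‖∑ j ∈ Finset.range m, y (w j)‖ ≤ A + Bc * (m:ℝ) ^ (1/p) := by
    by_cases hnull : ∀ ε > (0:ℝ), {n | ‖y n‖ < ε}.Infinite
    · have hfreq : ∀ j : ℕ, ∃ᶠ n in atTop, ‖y n‖ < (1/2:ℝ)^j := fun j =>
        Nat.frequently_atTop_iff_infinite.mpr (hnull _ (by positivity))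
      obtain ⟨τ, hτ, hτp⟩ := Filter.extraction_forall_of_frequently hfreq
      refine ⟨τ, hτ, 2, 0, by norm_num, le_rfl, ?_⟩
      intro m
      rw [zero_mul, add_zero]
      calc ‖∑ j ∈ Finset.range m, y (τ j)‖ ≤ ∑ j ∈ Finset.range m, ‖y (τ j)‖ :=
            norm_sum_le _ _
        _ ≤ ∑ j ∈ Finset.range m, (1/2:ℝ)^j :=
            Finset.sum_le_sum (fun j _ => le_of_lt (hτp j))
        _ ≤ 2 := sum_geometric_two_le m
    · push_neg at hnull
      obtain ⟨ε, hε, hfin⟩ := hnull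
      have hfin' : {n | ‖y n‖ < ε}.Finite := hfin
      obtain ⟨N, hN⟩ := hfin'.bddAbove
      set y' : ℕ → X := fun j => y (j + (N+1)) with hy'
      have hsemi : CLG.SemiNormalized y' := by
        refine ⟨ε, 2*b, hε, fun n => ⟨?_, hyb _⟩⟩
        by_contra hc
        push_neg at hc
        have hmem : n + (N+1) ∈ {n | ‖y n‖ < ε} := hc
        have := hN hmem
        omega
      have hweak : CLG.WeaklyNull y' := by
        intro φ
        obtain ⟨l, hl⟩ := hWC φ
        have h1 : Tendsto (fun j : ℕ => 2*(j + (N+1))+1) atTop atTop :=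
          StrictMono.tendsto_atTop (by intro a b hab; dsimp only; omega)
        have h2 : Tendsto (fun j : ℕ => 2*(j + (N+1))) atTop atTop :=
          StrictMono.tendsto_atTop (by intro a b hab; dsimp only; omega)
        have hsub := (hl.comp h1).sub (hl.comp h2)
        rw [sub_self] at hsub
        have heq : (fun j => φ (y' j)) =
            fun j => φ (x (σ (2*(j+(N+1))+1))) - φ (x (σ (2*(j+(N+1))))) := by
          funext j
          simp only [hy', hy, map_sub]
        rw [heq]
        exact hsub
      obtain ⟨φψ, hφψ, c, hc, hbound⟩ := hBS y' hsemi hweak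
      have hθ1 : (3/4:ℝ)^(1/p) < 1 :=
        Real.rpow_lt_one (by norm_num) (by norm_num) (by positivity)
      refine ⟨fun j => φψ j + (N+1), by intro a b hab; dsimp only; have := hφψ hab; omega,
        ‖y' (φψ 0)‖, c / (1 - (3/4:ℝ)^(1/p)), norm_nonneg _, ?_, ?_⟩
      · apply div_nonneg (le_of_lt hc)
        linarith
      · have hblock : ∀ m m' : ℕ, m ≤ m' → m' ≤ 2*m →
            ‖∑ j ∈ Finset.Ico m m', y' (φψ j)‖ ≤ c * ((m'-m : ℕ):ℝ)^(1/p) := by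
          intro m m' h1 h2
          have hsum : ∑ j ∈ Finset.Ico m m', y' (φψ j) =
              ∑ i : Fin (m' - m), y' (φψ (m + i.1)) := by
            rw [Finset.sum_Ico_eq_sum_range]
            rw [Fin.sum_univ_eq_sum_range (fun i => y' (φψ (m + i))) (m' - m)]
          rw [hsum]
          apply hbound (m' - m) (fun i => m + i.1)
          · intro i i' hii
            have hlt := Fin.lt_def.mp hii
            change m + i.1 < m + i'.1
            omega
          · intro i
            change m' - m ≤ m + i.1
            omega
        have hh := NW.halving_bound hp (le_of_lt hc) hblock
        intro m
        exact hh m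
  obtain ⟨w, hw, A, Bc, hA, hBc, hwbound⟩ := hmain
  set φfin : ℕ → ℕ := fun j => if j % 2 = 0 then σ (2 * w (j/2)) else σ (2 * w (j/2) + 1)
    with hφfin
  set ee : ℕ → ℝ := fun j => if j % 2 = 0 then (-1:ℝ) else 1 with hee
  have hφmono : StrictMono φfin := by
    apply strictMono_nat_of_lt_succ
    intro j
    rcases Nat.even_or_odd j with ⟨m, hm⟩ | ⟨m, hm⟩
    · subst hm
      have e1 : (m + m) % 2 = 0 := by omega
      have e2 : (m + m + 1) % 2 ≠ 0 := by omega
      have e3 : (m + m) / 2 = m := by omega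
      have e4 : (m + m + 1) / 2 = m := by omega
      simp only [hφfin, if_pos e1, if_neg e2, e3, e4]
      exact hσ (by omega)
    · subst hm
      have e1 : (2*m+1) % 2 ≠ 0 := by omega
      have e2 : (2*m+1+1) % 2 = 0 := by omega
      have e3 : (2*m+1) / 2 = m := by omega
      have e4 : (2*m+1+1) / 2 = m+1 := by omega
      simp only [hφfin, if_neg e1, if_pos e2, e3, e4]
      apply hσ
      have hww := hw (show m < m + 1 by omega)
      omega
  refine ⟨φfin, hφmono, ee, ?_, 0, ?_⟩
  · intro j
    simp only [hee]
    split_ifs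
    · exact Or.inr rfl
    · exact Or.inl rfl
  set T : ℕ → X := fun k => ∑ j ∈ Finset.range k, ee j • x (φfin j) with hT
  have hcomp : ∀ m, ee (2*m) • x (φfin (2*m)) + ee (2*m+1) • x (φfin (2*m+1)) = y (w m) := by
    intro m
    have e1 : (2*m) % 2 = 0 := by omega
    have e2 : (2*m+1) % 2 ≠ 0 := by omega
    have e3 : (2*m) / 2 = m := by omega
    have e4 : (2*m+1) / 2 = m := by omega
    simp only [hee, hφfin, if_pos e1, if_neg e2, e3, e4, hy]
    simp only [neg_smul, one_smul]
    abel
  have hT2 : ∀ m, T (2*m) = ∑ j ∈ Finset.range m, y (w j) := by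
    intro m
    induction m with
    | zero => simp [hT]
    | succ m ih =>
      have h2m : 2*(m+1) = (2*m) + 1 + 1 := by ring
      have hc := hcomp m
      simp only [hT] at ih ⊢
      simp only [hee, hφfin] at hc ih ⊢
      rw [h2m, Finset.sum_range_succ, Finset.sum_range_succ, Finset.sum_range_succ]
      rw [← ih, add_assoc, hc]
  have hTb : ∀ k, ‖T k‖ ≤ (A + 2*b) + Bc * (k:ℝ)^(1/p) := by
    intro k
    set m := k / 2 with hm
    have hmle : m ≤ k := Nat.div_le_self k 2
    have hpowle : Bc * (m:ℝ)^(1/p) ≤ Bc * (k:ℝ)^(1/p) :=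
      mul_le_mul_of_nonneg_left
        (Real.rpow_le_rpow (Nat.cast_nonneg m) (Nat.cast_le.mpr hmle) (by positivity)) hBc
    have hnorm2 : ‖ee (2*m) • x (φfin (2*m))‖ ≤ b := by
      have e1 : (2*m) % 2 = 0 := by omega
      simp only [hee, if_pos e1]
      rw [norm_smul, norm_neg, norm_one, one_mul]
      exact hb _
    rcases Nat.even_or_odd k with hk | hk
    · have h2 : k = 2*m := by
        have := Nat.even_iff.mp hk
        omega
      have hTk : T k = ∑ j ∈ Finset.range m, y (w j) := by rw [h2, hT2 m]
      rw [hTk]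
      calc ‖∑ j ∈ Finset.range m, y (w j)‖ ≤ A + Bc * (m:ℝ)^(1/p) := hwbound m
        _ ≤ (A + 2*b) + Bc * (k:ℝ)^(1/p) := by linarith
    · have h2 : k = 2*m+1 := by
        have := Nat.odd_iff.mp hk
        omega
      have hTk : T k = T (2*m) + ee (2*m) • x (φfin (2*m)) := by
        rw [h2]
        simp only [hT]
        rw [Finset.sum_range_succ]
      rw [hTk]
      calc ‖T (2*m) + ee (2*m) • x (φfin (2*m))‖
          ≤ ‖T (2*m)‖ + ‖ee (2*m) • x (φfin (2*m))‖ := norm_add_le _ _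
        _ ≤ (A + Bc * (m:ℝ)^(1/p)) + b := by
            rw [hT2 m]
            exact add_le_add (hwbound m) hnorm2
        _ ≤ (A + 2*b) + Bc * (k:ℝ)^(1/p) := by linarith
  exact NW.cesaro_decay hp (by linarith) hBc hTb

end
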